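/- arXiv:1907.05094 — 3 statements merged into one kernel-verified Lean document; each statement's English description precedes it below -/
import Mathlib

section
/- For two disjoint nonempty finite clusters A, B ⊂ R^d, (1/2)·min{|A|,|B|}·‖μ(A)−μ(B)‖² ≤ D(A,B) ≤ min{|A|,|B|}·‖μ(A)−μ(B)‖². -/
open Finset
open scoped Classical

noncomputable def centroid {d : ℕ} (P : Finset (EuclideanSpace ℝ (Fin d))) :
    EuclideanSpace ℝ (Fin d) :=
  (P.card : ℝ)⁻¹ • ∑ p ∈ P, p

noncomputable def Delta {d : ℕ} (P : Finset (EuclideanSpace ℝ (Fin d))) : ℝ :=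
  ∑ p ∈ P, ‖p - centroid P‖ ^ 2

noncomputable def mergeD {d : ℕ} (A B : Finset (EuclideanSpace ℝ (Fin d))) : ℝ :=
  Delta (A ∪ B) - Delta A - Delta B

lemma centroidEqDef {d : ℕ} (P : Finset (EuclideanSpace ℝ (Fin d))) :
    _root_.centroid P = (P.card : ℝ)⁻¹ • ∑ p ∈ P, p := rfl

lemma card_smul_centroid {d : ℕ} (P : Finset (EuclideanSpace ℝ (Fin d))) (hP : P.Nonempty) :
    (P.card : ℝ) • _root_.centroid P = ∑ p ∈ P, p := by
  have hc : (P.card : ℝ) ≠ 0 := Nat.cast_ne_zero.mpr hP.card_ne_zero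
  rw [centroidEqDef, smul_smul, mul_inv_cancel₀ hc, one_smul]

lemma sum_sub_centroid {d : ℕ} (P : Finset (EuclideanSpace ℝ (Fin d))) (hP : P.Nonempty) :
    ∑ p ∈ P, (p - _root_.centroid P) = 0 := by
  rw [Finset.sum_sub_distrib, Finset.sum_const, ← Nat.cast_smul_eq_nsmul ℝ,
    card_smul_centroid P hP, sub_self]

lemma sum_norm_sq_eq {d : ℕ} (P : Finset (EuclideanSpace ℝ (Fin d))) (hP : P.Nonempty)
    (c : EuclideanSpace ℝ (Fin d)) :
    ∑ p ∈ P, ‖p - c‖ ^ 2 = Delta P + (P.card : ℝ) * ‖_root_.centroid P - c‖ ^ 2 := by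
  have h : ∀ p ∈ P, ‖p - c‖ ^ 2 = ‖p - _root_.centroid P‖ ^ 2
      + 2 * inner ℝ (p - _root_.centroid P) (_root_.centroid P - c) + ‖_root_.centroid P - c‖ ^ 2 := by
    intro p _
    have h2 : p - c = (p - _root_.centroid P) + (_root_.centroid P - c) := by abel
    rw [h2, @norm_add_sq_real]
  rw [Finset.sum_congr rfl h, Finset.sum_add_distrib, Finset.sum_add_distrib,
    Finset.sum_const, ← Finset.mul_sum, ← sum_inner, sum_sub_centroid P hP, inner_zero_left,
    nsmul_eq_mul]
  simp [Delta]

lemma mergeD_eq {d : ℕ} (A B : Finset (EuclideanSpace ℝ (Fin d)))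
    (hA : A.Nonempty) (hB : B.Nonempty) (hAB : Disjoint A B) :
    mergeD A B = (A.card : ℝ) * (B.card : ℝ) / ((A.card : ℝ) + (B.card : ℝ))
      * ‖_root_.centroid A - _root_.centroid B‖ ^ 2 := by
  set a : ℝ := (A.card : ℝ) with ha
  set b : ℝ := (B.card : ℝ) with hb
  have ha1 : (1:ℝ) ≤ a := by rw [ha]; exact_mod_cast hA.card_pos
  have hb1 : (1:ℝ) ≤ b := by rw [hb]; exact_mod_cast hB.card_pos
  have hab : a + b ≠ 0 := by linarith
  have hcard : ((A ∪ B).card : ℝ) = a + b := by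
    rw [Finset.card_union_of_disjoint hAB]; push_cast; ring
  set m := _root_.centroid (A ∪ B) with hm
  have hsum : Delta (A ∪ B) = Delta A + a * ‖_root_.centroid A - m‖ ^ 2
      + (Delta B + b * ‖_root_.centroid B - m‖ ^ 2) := by
    rw [Delta, Finset.sum_union hAB, sum_norm_sq_eq A hA m, sum_norm_sq_eq B hB m]
  have hsA : (∑ p ∈ A, p) = a • _root_.centroid A := by
    rw [ha]; exact (card_smul_centroid A hA).symm
  have hsB : (∑ p ∈ B, p) = b • _root_.centroid B := by
    rw [hb]; exact (card_smul_centroid B hB).symm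
  have hmval : (a + b) • m = a • _root_.centroid A + b • _root_.centroid B := by
    rw [hm, ← hcard, card_smul_centroid _ (hA.mono Finset.subset_union_left),
      Finset.sum_union hAB, hsA, hsB]
  have hAm : _root_.centroid A - m = ((a + b)⁻¹ * b) • (_root_.centroid A - _root_.centroid B) := by
    have key : (a + b) • (_root_.centroid A - m) = b • (_root_.centroid A - _root_.centroid B) := by
      rw [smul_sub, hmval, smul_sub]
      match_scalars <;> ring
    calc _root_.centroid A - m = (a + b)⁻¹ • ((a + b) • (_root_.centroid A - m)) := by
          rw [smul_smul, inv_mul_cancel₀ hab, one_smul]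
      _ = ((a + b)⁻¹ * b) • (_root_.centroid A - _root_.centroid B) := by rw [key, smul_smul]
  have hBm : _root_.centroid B - m = ((a + b)⁻¹ * a) • (_root_.centroid B - _root_.centroid A) := by
    have key : (a + b) • (_root_.centroid B - m) = a • (_root_.centroid B - _root_.centroid A) := by
      rw [smul_sub, hmval, smul_sub]
      match_scalars <;> ring
    calc _root_.centroid B - m = (a + b)⁻¹ • ((a + b) • (_root_.centroid B - m)) := by
          rw [smul_smul, inv_mul_cancel₀ hab, one_smul]
      _ = ((a + b)⁻¹ * a) • (_root_.centroid B - _root_.centroid A) := by rw [key, smul_smul]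
  have hrev : ‖_root_.centroid B - _root_.centroid A‖ = ‖_root_.centroid A - _root_.centroid B‖ :=
    norm_sub_rev _ _
  rw [mergeD, hsum, hAm, hBm, norm_smul, norm_smul, hrev, mul_pow, mul_pow]
  have hinv : |(a + b)⁻¹ * b| = (a + b)⁻¹ * b := by
    rw [abs_of_nonneg]; positivity
  have hinv2 : |(a + b)⁻¹ * a| = (a + b)⁻¹ * a := by
    rw [abs_of_nonneg]; positivity
  rw [Real.norm_eq_abs, Real.norm_eq_abs, hinv, hinv2]
  field_simp
  ring

theorem mergeD_bounds {d : ℕ} (A B : Finset (EuclideanSpace ℝ (Fin d)))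
    (hA : A.Nonempty) (hB : B.Nonempty) (hAB : Disjoint A B) :
    (1 / 2) * (min (A.card : ℝ) (B.card : ℝ)) * ‖centroid A - centroid B‖ ^ 2 ≤ mergeD A B ∧
      mergeD A B ≤ (min (A.card : ℝ) (B.card : ℝ)) * ‖centroid A - centroid B‖ ^ 2 := by
  rw [mergeD_eq A B hA hB hAB]
  set a : ℝ := (A.card : ℝ) with ha
  set b : ℝ := (B.card : ℝ) with hb
  set n : ℝ := ‖_root_.centroid A - _root_.centroid B‖ ^ 2 with hn
  have hn0 : 0 ≤ n := by positivity
  have ha1 : (1:ℝ) ≤ a := by rw [ha]; exact_mod_cast hA.card_pos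
  have hb1 : (1:ℝ) ≤ b := by rw [hb]; exact_mod_cast hB.card_pos
  have hab : 0 < a + b := by linarith
  have hup : a * b / (a + b) ≤ min a b := by
    rcases le_total a b with h | h
    · rw [min_eq_left h, div_le_iff₀ hab]; nlinarith
    · rw [min_eq_right h, div_le_iff₀ hab]; nlinarith
  have hlo : (1 / 2) * min a b ≤ a * b / (a + b) := by
    rcases le_total a b with h | h
    · rw [min_eq_left h, le_div_iff₀ hab]; nlinarith
    · rw [min_eq_right h, le_div_iff₀ hab]; nlinarith
  constructor
  · calc (1 / 2) * min a b * n ≤ a * b / (a + b) * n :=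
        mul_le_mul_of_nonneg_right hlo hn0
      _ = _ := rfl
  · exact mul_le_mul_of_nonneg_right hup hn0
end

section
/- Let A, B, C, D be pairwise disjoint finite point sets in R^d with |A| ≤ |B| and |C| ≥ |D|. Then Δ(A∪B∪C∪D) ≤ Δ(A) + 3·Δ(B∪C) + Δ(D) + 4·D(A,B) + 4·D(C,D). -/
open Finset
open scoped Classical

lemma Delta_nonneg {d : ℕ} (P : Finset (EuclideanSpace ℝ (Fin d))) : 0 ≤ Delta P :=
  Finset.sum_nonneg fun _ _ => sq_nonneg _

lemma sum_norm_sub_sq {d : ℕ} (P : Finset (EuclideanSpace ℝ (Fin d)))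
    (z : EuclideanSpace ℝ (Fin d)) :
    ∑ p ∈ P, ‖p - z‖ ^ 2 = Delta P + (P.card : ℝ) * ‖_root_.centroid P - z‖ ^ 2 := by
  rcases P.eq_empty_or_nonempty with h | h
  · simp [h, Delta]
  have key : ∀ p ∈ P, ‖p - z‖ ^ 2 = ‖p - _root_.centroid P‖ ^ 2
      + 2 * (inner ℝ (p - _root_.centroid P) (_root_.centroid P - z) : ℝ) + ‖_root_.centroid P - z‖ ^ 2 := by
    intro p _
    have hpz : p - z = (p - _root_.centroid P) + (_root_.centroid P - z) := by abel
    rw [hpz, @norm_add_sq_real]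
  rw [Finset.sum_congr rfl key, Finset.sum_add_distrib, Finset.sum_add_distrib]
  have hz : ∑ p ∈ P, 2 * (inner ℝ (p - _root_.centroid P) (_root_.centroid P - z) : ℝ) = 0 := by
    rw [← Finset.mul_sum, ← sum_inner, sum_sub_centroid P h, inner_zero_left, mul_zero]
  rw [hz, Finset.sum_const, nsmul_eq_mul, Delta, add_zero]

lemma mergeD_eq_s6 {d : ℕ} (X Y : Finset (EuclideanSpace ℝ (Fin d))) (h : Disjoint X Y) :
    mergeD X Y = (X.card : ℝ) * ‖_root_.centroid X - _root_.centroid (X ∪ Y)‖ ^ 2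
      + (Y.card : ℝ) * ‖_root_.centroid Y - _root_.centroid (X ∪ Y)‖ ^ 2 := by
  have hU : Delta (X ∪ Y) = ∑ p ∈ X ∪ Y, ‖p - _root_.centroid (X ∪ Y)‖ ^ 2 := rfl
  rw [mergeD, hU, Finset.sum_union h, sum_norm_sub_sq, sum_norm_sub_sq]
  ring

lemma sq_norm_add_le {E : Type*} [SeminormedAddGroup E] (x y : E) :
    ‖x + y‖ ^ 2 ≤ 2 * ‖x‖ ^ 2 + 2 * ‖y‖ ^ 2 := by
  have h := norm_add_le x y
  nlinarith [norm_nonneg x, norm_nonneg y, norm_nonneg (x + y), sq_nonneg (‖x‖ - ‖y‖),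
    mul_self_le_mul_self (norm_nonneg (x + y)) h]

theorem delta_union_four_bound {d : ℕ} (A B C D : Finset (EuclideanSpace ℝ (Fin d)))
    (hAB : Disjoint A B) (hAC : Disjoint A C) (hAD : Disjoint A D)
    (hBC : Disjoint B C) (hBD : Disjoint B D) (hCD : Disjoint C D)
    (hcardAB : A.card ≤ B.card) (hcardCD : D.card ≤ C.card) :
    Delta (A ∪ B ∪ C ∪ D) ≤
      Delta A + 3 * Delta (B ∪ C) + Delta D + 4 * mergeD A B + 4 * mergeD C D := by
  set z := _root_.centroid (B ∪ C) with hz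
  set a : ℝ := (A.card : ℝ)
  set b : ℝ := (B.card : ℝ)
  set c : ℝ := (C.card : ℝ)
  set e : ℝ := (D.card : ℝ)
  have ha : (0:ℝ) ≤ a := Nat.cast_nonneg _
  have hb : (0:ℝ) ≤ b := Nat.cast_nonneg _
  have hc : (0:ℝ) ≤ c := Nat.cast_nonneg _
  have he : (0:ℝ) ≤ e := Nat.cast_nonneg _
  have hab : a ≤ b := Nat.cast_le.mpr hcardAB
  have hec : e ≤ c := Nat.cast_le.mpr hcardCD
  -- Step 1: bound Delta of the big union by the sum of squared distances to z
  have hD1 : Disjoint (A ∪ B ∪ C) D := by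
    simp [Finset.disjoint_union_left, hAD, hBD, hCD]
  have hD2 : Disjoint A (B ∪ C) := by
    simp [Finset.disjoint_union_right, hAB, hAC]
  have step1 : Delta (A ∪ B ∪ C ∪ D) ≤ ∑ p ∈ A ∪ B ∪ C ∪ D, ‖p - z‖ ^ 2 := by
    rw [sum_norm_sub_sq]
    nlinarith [sq_nonneg ‖_root_.centroid (A ∪ B ∪ C ∪ D) - z‖,
      (Nat.cast_nonneg (A ∪ B ∪ C ∪ D).card : (0:ℝ) ≤ _)]
  have split : ∑ p ∈ A ∪ B ∪ C ∪ D, ‖p - z‖ ^ 2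
      = (Delta A + a * ‖_root_.centroid A - z‖ ^ 2) + Delta (B ∪ C)
        + (Delta D + e * ‖_root_.centroid D - z‖ ^ 2) := by
    rw [Finset.sum_union hD1, Finset.union_assoc, Finset.sum_union hD2,
      sum_norm_sub_sq A z, sum_norm_sub_sq D z, sum_norm_sub_sq (B ∪ C) z]
    simp only [← hz, sub_self, norm_zero]
    ring
  -- Step 2: bound the A bias term
  have boundA : a * ‖_root_.centroid A - z‖ ^ 2 ≤ 4 * mergeD A B + 2 * a * ‖_root_.centroid B - z‖ ^ 2 := by
    have t1 : ‖_root_.centroid A - z‖ ^ 2 ≤ 2 * ‖_root_.centroid A - _root_.centroid B‖ ^ 2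
        + 2 * ‖_root_.centroid B - z‖ ^ 2 := by
      have h := sq_norm_add_le (_root_.centroid A - _root_.centroid B) (_root_.centroid B - z)
      rw [sub_add_sub_cancel] at h
      exact h
    have t2 : ‖_root_.centroid A - _root_.centroid B‖ ^ 2 ≤ 2 * ‖_root_.centroid A - _root_.centroid (A ∪ B)‖ ^ 2
        + 2 * ‖_root_.centroid B - _root_.centroid (A ∪ B)‖ ^ 2 := by
      have h := sq_norm_add_le (_root_.centroid A - _root_.centroid (A ∪ B)) (_root_.centroid (A ∪ B) - _root_.centroid B)
      rw [sub_add_sub_cancel] at h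
      rw [← norm_sub_rev (_root_.centroid B) (_root_.centroid (A ∪ B))] at h
      exact h
    rw [mergeD_eq_s6 A B hAB]
    nlinarith [sq_nonneg ‖_root_.centroid A - _root_.centroid (A ∪ B)‖,
      sq_nonneg ‖_root_.centroid B - _root_.centroid (A ∪ B)‖, sq_nonneg ‖_root_.centroid B - z‖,
      mul_le_mul_of_nonneg_left t1 ha, mul_le_mul_of_nonneg_left t2 ha,
      mul_le_mul_of_nonneg_right hab (sq_nonneg ‖_root_.centroid B - _root_.centroid (A ∪ B)‖)]
  -- Step 3: bound the D bias term
  have boundD : e * ‖_root_.centroid D - z‖ ^ 2 ≤ 4 * mergeD C D + 2 * e * ‖_root_.centroid C - z‖ ^ 2 := by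
    have t1 : ‖_root_.centroid D - z‖ ^ 2 ≤ 2 * ‖_root_.centroid D - _root_.centroid C‖ ^ 2
        + 2 * ‖_root_.centroid C - z‖ ^ 2 := by
      have h := sq_norm_add_le (_root_.centroid D - _root_.centroid C) (_root_.centroid C - z)
      rw [sub_add_sub_cancel] at h
      exact h
    have t2 : ‖_root_.centroid D - _root_.centroid C‖ ^ 2 ≤ 2 * ‖_root_.centroid D - _root_.centroid (C ∪ D)‖ ^ 2
        + 2 * ‖_root_.centroid C - _root_.centroid (C ∪ D)‖ ^ 2 := by
      have h := sq_norm_add_le (_root_.centroid D - _root_.centroid (C ∪ D)) (_root_.centroid (C ∪ D) - _root_.centroid C)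
      rw [sub_add_sub_cancel] at h
      rw [← norm_sub_rev (_root_.centroid C) (_root_.centroid (C ∪ D))] at h
      exact h
    rw [mergeD_eq_s6 C D hCD]
    nlinarith [sq_nonneg ‖_root_.centroid D - _root_.centroid (C ∪ D)‖,
      sq_nonneg ‖_root_.centroid C - _root_.centroid (C ∪ D)‖, sq_nonneg ‖_root_.centroid C - z‖,
      mul_le_mul_of_nonneg_left t1 he, mul_le_mul_of_nonneg_left t2 he,
      mul_le_mul_of_nonneg_right hec (sq_nonneg ‖_root_.centroid C - _root_.centroid (C ∪ D)‖)]
  -- Step 4: the middle terms are controlled by mergeD B C ≤ Delta (B ∪ C)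
  have boundMid : 2 * a * ‖_root_.centroid B - z‖ ^ 2 + 2 * e * ‖_root_.centroid C - z‖ ^ 2
      ≤ 2 * Delta (B ∪ C) := by
    have hm : mergeD B C = b * ‖_root_.centroid B - z‖ ^ 2 + c * ‖_root_.centroid C - z‖ ^ 2 := by
      rw [mergeD_eq_s6 B C hBC]
    have hmle : mergeD B C ≤ Delta (B ∪ C) := by
      have := Delta_nonneg B
      have := Delta_nonneg C
      rw [mergeD]; linarith
    nlinarith [mul_le_mul_of_nonneg_right hab (sq_nonneg ‖_root_.centroid B - z‖),
      mul_le_mul_of_nonneg_right hec (sq_nonneg ‖_root_.centroid C - z‖)]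
  linarith [step1, split.le, split.ge, boundA, boundD, boundMid]
end

section
/- For any three finite, pairwise disjoint, nonempty clusters A, B, C ⊂ R (viewed as subsets of R¹, each being convex in the sense that no point of another cluster lies between two of its points) with μ(A) < μ(C) < μ(B), we have D(A,C) < D(A,B) or D(B,C) < D(A,B). -/
open Finset
open scoped Classical

noncomputable def mu1 (P : Finset ℝ) : ℝ := (∑ p ∈ P, p) / P.card

noncomputable def Delta1 (P : Finset ℝ) : ℝ := ∑ p ∈ P, (p - mu1 P) ^ 2

noncomputable def mergeD1 (A B : Finset ℝ) : ℝ := Delta1 (A ∪ B) - Delta1 A - Delta1 B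

/-- `A` is convex with respect to `Q`: no point of `Q` lies in the interval
spanned by `A`. -/
def ConvexWrt (A Q : Finset ℝ) (hA : A.Nonempty) : Prop :=
  ∀ x ∈ Q, x ∉ Set.Icc (A.min' hA) (A.max' hA)

lemma Delta1_eq (P : Finset ℝ) (hP : P.Nonempty) :
    Delta1 P = (∑ p ∈ P, p ^ 2) - (∑ p ∈ P, p) ^ 2 / P.card := by
  have hn : (P.card : ℝ) ≠ 0 := by
    exact_mod_cast (Finset.card_pos.mpr hP).ne'
  unfold Delta1 mu1
  set S := ∑ p ∈ P, p with hS
  have expand : ∀ p ∈ P, (p - S / P.card) ^ 2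
      = p ^ 2 - 2 * (S / P.card) * p + (S / P.card) ^ 2 := fun p _ => by ring
  rw [Finset.sum_congr rfl expand]
  rw [Finset.sum_add_distrib, Finset.sum_sub_distrib, ← Finset.mul_sum,
    Finset.sum_const, nsmul_eq_mul, ← hS]
  field_simp
  ring

lemma mergeD1_eq (X Y : Finset ℝ) (hX : X.Nonempty) (hY : Y.Nonempty) (h : Disjoint X Y) :
    mergeD1 X Y = (X.card * Y.card) / (X.card + Y.card) * (mu1 X - mu1 Y) ^ 2 := by
  have hx : (0:ℝ) < X.card := by exact_mod_cast Finset.card_pos.mpr hX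
  have hy : (0:ℝ) < Y.card := by exact_mod_cast Finset.card_pos.mpr hY
  unfold mergeD1
  rw [Delta1_eq X hX, Delta1_eq Y hY, Delta1_eq _ (hX.mono Finset.subset_union_left),
    Finset.sum_union h, Finset.sum_union h, Finset.card_union_of_disjoint h]
  unfold mu1
  push_cast
  field_simp
  ring

set_option maxHeartbeats 1000000 in
theorem convexity_one_dim (A B C : Finset ℝ)
    (hA : A.Nonempty) (hB : B.Nonempty) (hC : C.Nonempty)
    (hAB : Disjoint A B) (hAC : Disjoint A C) (hBC : Disjoint B C)
    (hAconv : ConvexWrt A (B ∪ C) hA)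
    (hBconv : ConvexWrt B (A ∪ C) hB)
    (hCconv : ConvexWrt C (A ∪ B) hC)
    (horder : mu1 A < mu1 C ∧ mu1 C < mu1 B) :
    mergeD1 A C < mergeD1 A B ∨ mergeD1 B C < mergeD1 A B := by
  obtain ⟨h1, h2⟩ := horder
  by_contra hcon
  push_neg at hcon
  obtain ⟨g1, g2⟩ := hcon
  rw [mergeD1_eq A B hA hB hAB, mergeD1_eq A C hA hC hAC] at g1
  rw [mergeD1_eq A B hA hB hAB, mergeD1_eq B C hB hC hBC] at g2
  have ha : (0:ℝ) < A.card := by exact_mod_cast Finset.card_pos.mpr hA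
  have hb : (0:ℝ) < B.card := by exact_mod_cast Finset.card_pos.mpr hB
  have hc : (0:ℝ) < C.card := by exact_mod_cast Finset.card_pos.mpr hC
  set a := (A.card : ℝ)
  set b := (B.card : ℝ)
  set c := (C.card : ℝ)
  set p := mu1 A
  set q := mu1 C
  set r := mu1 B
  -- clear denominators
  have hab : (0:ℝ) < a + b := by linarith
  have hac : (0:ℝ) < a + c := by linarith
  have hbc : (0:ℝ) < b + c := by linarith
  have G1 : a * b / (a + b) * (p - r) ^ 2 ≤ a * c / (a + c) * (p - q) ^ 2 := g1
  have G2 : a * b / (a + b) * (p - r) ^ 2 ≤ b * c / (b + c) * (r - q) ^ 2 := g2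
  rw [div_mul_eq_mul_div, div_mul_eq_mul_div, div_le_div_iff₀ hab hac] at G1
  rw [div_mul_eq_mul_div, div_mul_eq_mul_div, div_le_div_iff₀ hab hbc] at G2
  have K1' : b * (p - r) ^ 2 * (a + c) ≤ c * (p - q) ^ 2 * (a + b) := by
    nlinarith [G1, ha]
  have K2' : a * (p - r) ^ 2 * (b + c) ≤ c * (r - q) ^ 2 * (a + b) := by
    nlinarith [G2, hb]
  have K1 : b * (p - r) ^ 2 ≤ (a + b) * (p - q) ^ 2 := by
    nlinarith [K1', mul_nonneg ha.le (mul_nonneg hb.le (sq_nonneg (p - r))), hc]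
  have K2 : a * (p - r) ^ 2 ≤ (a + b) * (r - q) ^ 2 := by
    nlinarith [K2', mul_nonneg ha.le (mul_nonneg hb.le (sq_nonneg (p - r))), hc]
  nlinarith [K1, K2, mul_pos hab (mul_pos (sub_pos.mpr h1) (sub_pos.mpr h2))]
end
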